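/- arXiv:1905.06098 — 3 statements merged into one kernel-verified Lean document; each statement's English description precedes it below -/
import Mathlib

section
/- Let e be a functional on a space of curves that is invariant under Möbius transformations and admits an L²-gradient G_e, meaning (d/dε)e(f + εu)|_{ε=0} = ∫_{S¹} ⟨u(t), G_e(f)(t)⟩ |f'(t)| dt for all normal vector fields u along f. Then G_e vanishes at every round circle: if f₀ parametrizes a round circle, G_e(f₀) ≡ 0. -/
open Real MeasureTheory
open scoped RealInnerProductSpace

noncomputable section

/-- If `ρ` agrees near `0` with its composition with a map `ζ` fixing `0` with
derivative `-1` there, then `deriv ρ 0 = 0`. -/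
lemma deriv_zero_of_invol {ρ ζ : ℝ → ℝ} (hζ : HasDerivAt ζ (-1) 0) (hζ0 : ζ 0 = 0)
    (heq : ∀ᶠ ε in nhds (0:ℝ), ρ (ζ ε) = ρ ε) : deriv ρ 0 = 0 := by
  by_cases hd : DifferentiableAt ℝ ρ 0
  · have h1 := hd.hasDerivAt
    have h1' : HasDerivAt ρ (deriv ρ 0) (ζ 0) := by rw [hζ0]; exact h1
    have h2 : HasDerivAt (fun ε => ρ (ζ ε)) (deriv ρ 0 * -1) 0 := h1'.comp 0 hζ
    have h3 : HasDerivAt ρ (deriv ρ 0 * -1) 0 :=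
      h2.congr_of_eventuallyEq (heq.mono fun ε hε => hε.symm)
    have h4 := h3.unique h1
    linarith
  · exact deriv_zero_of_not_differentiableAt hd

/-- A continuous nonnegative function with vanishing integral on `[0,1]` vanishes there. -/
lemma zero_of_integral_zero {q : ℝ → ℝ} (hc : Continuous q) (h0 : ∀ t, 0 ≤ q t)
    (hI : (∫ t in (0:ℝ)..1, q t) = 0) : ∀ t ∈ Set.Icc (0:ℝ) 1, q t = 0 := by
  intro t₀ ht₀
  by_contra hne
  have hpos : 0 < q t₀ := lt_of_le_of_ne (h0 t₀) (Ne.symm hne)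
  have hopen : IsOpen {x : ℝ | 0 < q x} := isOpen_lt continuous_const hc
  obtain ⟨δ, hδ, hball⟩ := Metric.isOpen_iff.1 hopen t₀ hpos
  have h01 : (0:ℝ) ≤ t₀ := ht₀.1
  have h11 : t₀ ≤ 1 := ht₀.2
  set α := max 0 (t₀ - δ/2) with hα
  set β := min 1 (t₀ + δ/2) with hβ
  have hαβ : α < β := by
    apply max_lt
    · exact lt_min (by norm_num) (by linarith)
    · exact lt_min (by linarith) (by linarith)
  have hsub : ∀ x ∈ Set.Ioo α β, 0 < q x := by
    intro x hx
    apply hball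
    rw [Metric.mem_ball, Real.dist_eq, abs_sub_lt_iff]
    have hx1 := hx.1
    have hx2 := hx.2
    have h1 : t₀ - δ/2 ≤ α := le_max_right _ _
    have h2 : β ≤ t₀ + δ/2 := min_le_right _ _
    constructor <;> linarith
  have hpos2 : 0 < ∫ x in α..β, q x :=
    intervalIntegral.intervalIntegral_pos_of_pos_on (hc.intervalIntegrable _ _) hsub hαβ
  have hmono : (∫ x in α..β, q x) ≤ ∫ x in (0:ℝ)..1, q x :=
    intervalIntegral.integral_mono_interval (le_max_left _ _) hαβ.le (min_le_left _ _)
      (Filter.Eventually.of_forall h0) (hc.intervalIntegrable _ _)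
  linarith

/-- Norm of a combination of two orthonormal vectors. -/
lemma norm_ab {F : Type*} [NormedAddCommGroup F] [InnerProductSpace ℝ F] {v w : F}
    (hv : ‖v‖ = 1) (hw : ‖w‖ = 1) (hvw : ⟪v, w⟫ = 0) (a b : ℝ) :
    ‖a • v + b • w‖ = Real.sqrt (a^2 + b^2) := by
  have h1 : (⟪w, v⟫ : ℝ) = 0 := by rw [real_inner_comm]; exact hvw
  have hvv : (⟪v, v⟫ : ℝ) = 1 := by rw [real_inner_self_eq_norm_sq, hv]; norm_num
  have hww : (⟪w, w⟫ : ℝ) = 1 := by rw [real_inner_self_eq_norm_sq, hw]; norm_num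
  rw [norm_eq_sqrt_real_inner]
  congr 1
  simp only [inner_add_left, inner_add_right, real_inner_smul_left, real_inner_smul_right,
    hvw, h1, hvv, hww]
  ring


abbrev E3 := EuclideanSpace ℝ (Fin 3)

/-- Inversion in the unit sphere centered at the origin. -/
def inv3 (p : E3) : E3 := (‖p‖ ^ 2)⁻¹ • p

/-- Reflection in the plane `ℝ² × {0}`. -/
def refl3 (p : E3) : E3 := p - (2 * p 2) • EuclideanSpace.single 2 (1 : ℝ)

set_option maxHeartbeats 1000000 in
/-- A Möbius invariant functional `e` on the space of knots admitting an
`L²`-gradient `G` has vanishing gradient at every round circle. -/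
theorem stmt7 (e : (ℝ → E3) → ℝ) (G : (ℝ → E3) → ℝ → E3)
    -- `G` is the `L²`-gradient of `e`
    (hgrad : ∀ f u : ℝ → E3,
      deriv (fun ε : ℝ => e (fun t => f t + ε • u t)) 0
        = ∫ t in (0:ℝ)..1, ⟪u t, G f t⟫ * ‖deriv f t‖)
    -- Möbius invariance of `e` (instances under the generators of the Möbius group):
    (hinv : ∀ f : ℝ → E3, (∀ t, f t ≠ 0) →
      e (fun t => refl3 (inv3 (f t))) = e f)
    (htrans : ∀ (f : ℝ → E3) (p : E3), e (fun t => p + f t) = e f)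
    (hscale : ∀ (f : ℝ → E3) (k : ℝ), 0 < k → e (fun t => k • f t) = e f)
    (hiso : ∀ (f : ℝ → E3) (O : E3 ≃ₗᵢ[ℝ] E3), e (fun t => O (f t)) = e f)
    -- `f₀` parametrizes a round circle of radius `r` and center `c`
    (c v w : E3) (r : ℝ) (hr : 0 < r)
    (hv : ‖v‖ = 1) (hw : ‖w‖ = 1) (hvw : ⟪v, w⟫ = 0)
    (f₀ : ℝ → E3)
    (hf₀ : ∀ t, f₀ t = c + (r * Real.cos (2 * π * t)) • v + (r * Real.sin (2 * π * t)) • w)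
    -- `G f₀` is a normal field along `f₀`, continuous and periodic
    (hGn : ∀ t, ⟪G f₀ t, deriv f₀ t⟫ = 0)
    (hGc : Continuous (G f₀)) (hGp : Function.Periodic (G f₀) 1) :
    ∀ t, G f₀ t = 0 := by
  obtain ⟨g, hgeq⟩ : ∃ g, G f₀ = g := ⟨_, rfl⟩
  rw [hgeq] at hGn hGc hGp
  -- orthonormal basis extending v, w
  have hcard : Module.finrank ℝ E3 = Fintype.card (Fin 3) := by
    simp [finrank_euclideanSpace_fin]
  have horth : Orthonormal ℝ (Set.restrict ({0, 1} : Set (Fin 3)) ![v, w, 0]) := by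
    rw [orthonormal_iff_ite]
    rintro ⟨i, hi⟩ ⟨j, hj⟩
    have hvv : (⟪v, v⟫ : ℝ) = 1 := by rw [real_inner_self_eq_norm_sq, hv]; norm_num
    have hww : (⟪w, w⟫ : ℝ) = 1 := by rw [real_inner_self_eq_norm_sq, hw]; norm_num
    have hwv : (⟪w, v⟫ : ℝ) = 0 := by rw [real_inner_comm]; exact hvw
    have hi' : i = 0 ∨ i = 1 := by simpa using hi
    have hj' : j = 0 ∨ j = 1 := by simpa using hj
    rcases hi' with rfl | rfl <;> rcases hj' with rfl | rfl <;>
      simp [hvv, hww, hvw, hwv, Subtype.ext_iff, hv, hw, Set.restrict]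
  obtain ⟨b, hb⟩ := horth.exists_orthonormalBasis_extension_of_card_eq hcard
  have hb0 : b 0 = v := by simpa using hb 0 (by simp)
  have hb1 : b 1 = w := by simpa using hb 1 (by simp)
  set O := b.repr.symm with hO
  set n := b 2 with hn
  have hnv : (⟪n, v⟫ : ℝ) = 0 := by
    rw [← hb0, hn]; exact b.orthonormal.2 (by decide : (2 : Fin 3) ≠ 0)
  have hnw : (⟪n, w⟫ : ℝ) = 0 := by
    rw [← hb1, hn]; exact b.orthonormal.2 (by decide : (2 : Fin 3) ≠ 1)
  have hnn : ‖n‖ = 1 := by rw [hn]; exact b.orthonormal.1 2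
  -- standard circle and radial field
  set fstd : ℝ → E3 := fun t =>
    Real.cos (2 * π * t) • EuclideanSpace.single 0 (1:ℝ)
      + Real.sin (2 * π * t) • EuclideanSpace.single 1 (1:ℝ) with hfstd
  set urad : ℝ → E3 := fun t => Real.cos (2 * π * t) • v + Real.sin (2 * π * t) • w with hurad
  have hsingle0 : ‖(EuclideanSpace.single 0 (1:ℝ) : E3)‖ = 1 := by
    rw [EuclideanSpace.norm_single]; norm_num
  have hsingle1 : ‖(EuclideanSpace.single 1 (1:ℝ) : E3)‖ = 1 := by
    rw [EuclideanSpace.norm_single]; norm_num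
  have hsingle01 : (⟪(EuclideanSpace.single 0 (1:ℝ) : E3), EuclideanSpace.single 1 (1:ℝ)⟫ : ℝ) = 0 := by
    rw [EuclideanSpace.inner_single_left]
    simp [EuclideanSpace.single_apply]
  have hfstd_norm : ∀ t, ‖fstd t‖ = 1 := by
    intro t
    rw [hfstd]
    rw [norm_ab hsingle0 hsingle1 hsingle01]
    rw [Real.cos_sq_add_sin_sq]
    exact Real.sqrt_one
  have hfstd2 : ∀ t, (fstd t) 2 = 0 := by
    intro t
    simp [hfstd, EuclideanSpace.single_apply]
  have hOfstd : ∀ t, O (fstd t) = urad t := by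
    intro t
    rw [hfstd, hurad]
    simp only
    rw [map_add, _root_.map_smul, _root_.map_smul, hO,
      OrthonormalBasis.repr_symm_single, OrthonormalBasis.repr_symm_single, hb0, hb1]
  have hOe2 : O (EuclideanSpace.single 2 (1:ℝ)) = n := by
    rw [hO, OrthonormalBasis.repr_symm_single, hn]
  -- the master invariance
  have einv : ∀ h : ℝ → E3, e (fun t => c + r • O (h t)) = e h := by
    intro h
    calc e (fun t => c + r • O (h t)) = e (fun t => r • O (h t)) := htrans _ c
      _ = e (fun t => O (h t)) := hscale _ r hr
      _ = e h := hiso h O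
  -- derivative of f₀
  have hf₀' : ∀ t, HasDerivAt f₀
      ((-(2*π*r) * Real.sin (2*π*t)) • v + ((2*π*r) * Real.cos (2*π*t)) • w) t := by
    intro t
    have hfeq : f₀ = fun s => c + ((r * Real.cos (2*π*s)) • v + (r * Real.sin (2*π*s)) • w) := by
      funext s; rw [hf₀ s, add_assoc]
    rw [hfeq]
    have hid : HasDerivAt (fun s : ℝ => 2*π*s) (2*π) t := by
      simpa using (hasDerivAt_id t).const_mul (2*π)
    have hcos : HasDerivAt (fun s : ℝ => Real.cos (2*π*s)) (-Real.sin (2*π*t) * (2*π)) t :=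
      (Real.hasDerivAt_cos (2*π*t)).comp t hid
    have hsin : HasDerivAt (fun s : ℝ => Real.sin (2*π*s)) (Real.cos (2*π*t) * (2*π)) t :=
      (Real.hasDerivAt_sin (2*π*t)).comp t hid
    have h1 : HasDerivAt (fun s : ℝ => (r * Real.cos (2*π*s)) • v)
        ((r * (-Real.sin (2*π*t) * (2*π))) • v) t := (hcos.const_mul r).smul_const v
    have h2 : HasDerivAt (fun s : ℝ => (r * Real.sin (2*π*s)) • w)
        ((r * (Real.cos (2*π*t) * (2*π))) • w) t := (hsin.const_mul r).smul_const w
    have h3 := (h1.add h2).const_add c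
    refine h3.congr_deriv ?_
    module
  have hderiv : ∀ t, deriv f₀ t
      = (-(2*π*r) * Real.sin (2*π*t)) • v + ((2*π*r) * Real.cos (2*π*t)) • w :=
    fun t => (hf₀' t).deriv
  have hnormd : ∀ t, ‖deriv f₀ t‖ = 2*π*r := by
    intro t
    rw [hderiv t, norm_ab hv hw hvw]
    have hsc : (-(2*π*r) * Real.sin (2*π*t))^2 + ((2*π*r) * Real.cos (2*π*t))^2 = (2*π*r)^2 := by
      have h := Real.sin_sq_add_cos_sq (2*π*t)
      nlinarith [h]
    rw [hsc, Real.sqrt_sq (by positivity)]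
  -- tangential relation
  have htan : ∀ t, -Real.sin (2*π*t) * ⟪v, g t⟫ + Real.cos (2*π*t) * ⟪w, g t⟫ = 0 := by
    intro t
    have h := hGn t
    rw [hderiv t, inner_add_right, real_inner_smul_right, real_inner_smul_right,
      real_inner_comm v (g t), real_inner_comm w (g t)] at h
    have hπ : (2*π*r) ≠ 0 := by positivity
    apply mul_left_cancel₀ hπ
    rw [mul_zero]
    linear_combination h
  -- the radial profile
  set ψ : ℝ → ℝ := fun t => Real.cos (2*π*t) * ⟪v, g t⟫ + Real.sin (2*π*t) * ⟪w, g t⟫ with hψ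
  have hurad_inner : ∀ t, (⟪urad t, g t⟫ : ℝ) = ψ t := by
    intro t
    rw [hurad, hψ]
    simp only
    rw [inner_add_left, real_inner_smul_left, real_inner_smul_left]
  have hψc : Continuous ψ := by
    apply Continuous.add
    · exact (Real.continuous_cos.comp (continuous_const.mul continuous_id)).mul
        (continuous_const.inner hGc)
    · exact (Real.continuous_sin.comp (continuous_const.mul continuous_id)).mul
        (continuous_const.inner hGc)
  ----------------------------------------------------------------
  -- KEY RADIAL IDENTITY
  ----------------------------------------------------------------
  have keyR : ∀ A : Set ℝ, (∫ t in (0:ℝ)..1, A.indicator (fun _ => (1:ℝ)) t * ψ t) = 0 := by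
    intro A
    set χ : ℝ → ℝ := A.indicator (fun _ => (1:ℝ)) with hχ
    have hχ01 : ∀ t, χ t = 0 ∨ χ t = 1 := by
      intro t; by_cases ht : t ∈ A
      · right; simp [hχ, ht]
      · left; simp [hχ, ht]
    set u : ℝ → E3 := fun t => (r * χ t) • urad t with hu
    set ρ : ℝ → ℝ := fun ε => e (fun t => f₀ t + ε • u t) with hρ
    set ζ : ℝ → ℝ := fun ε => -ε/(1+ε) with hζdef
    have hline : ∀ ε : ℝ, (fun t => f₀ t + ε • u t)
        = (fun t => c + r • O ((1 + ε * χ t) • fstd t)) := by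
      intro ε; funext t
      have hOs : O ((1 + ε * χ t) • fstd t) = (1 + ε * χ t) • urad t := by
        rw [_root_.map_smul, hOfstd]
      rw [hf₀ t, hu, hOs, hurad]
      module
    have hval : ∀ ε : ℝ, ρ ε = e (fun t => (1 + ε * χ t) • fstd t) := by
      intro ε
      rw [hρ]
      simp only
      rw [hline ε, einv]
    have hinvstep : ∀ ε : ℝ, |ε| < 1 →
        e (fun t => (1 + ε * χ t) • fstd t) = e (fun t => (1 + ζ ε * χ t) • fstd t) := by
      intro ε hε
      have hε1 : (0:ℝ) < 1 + ε := by
        rcases abs_lt.1 hε with ⟨h1, h2⟩; linarith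
      have hpos : ∀ t, (0:ℝ) < 1 + ε * χ t := by
        intro t; rcases hχ01 t with h | h <;> rw [h] <;> [norm_num; linarith]
      have hne : ∀ t, (1 + ε * χ t) • fstd t ≠ 0 := by
        intro t
        simp only [ne_eq, smul_eq_zero, not_or]
        refine ⟨(hpos t).ne', fun h0 => ?_⟩
        have hh := hfstd_norm t
        rw [h0] at hh
        simp at hh
      have hJ := hinv (fun t => (1 + ε * χ t) • fstd t) hne
      rw [← hJ]
      congr 1
      funext t
      have hnrm : ‖(1 + ε * χ t) • fstd t‖ = 1 + ε * χ t := by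
        rw [norm_smul, hfstd_norm, mul_one, Real.norm_eq_abs, abs_of_pos (hpos t)]
      have hi : inv3 ((1 + ε * χ t) • fstd t) = (1 + ε * χ t)⁻¹ • fstd t := by
        rw [inv3, hnrm, smul_smul]
        congr 1
        have h := (hpos t).ne'
        field_simp
      rw [hi, refl3]
      have hp2 : ((1 + ε * χ t)⁻¹ • fstd t) 2 = 0 := by
        have := hfstd2 t
        simp [PiLp.smul_apply, this]
      rw [hp2, mul_zero, zero_smul, sub_zero]
      rcases hχ01 t with h | h <;> rw [h]
      · norm_num
      · have h1 : (1:ℝ) + ε ≠ 0 := hε1.ne'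
        rw [hζdef]
        simp only
        congr 1
        field_simp
        ring
    have hev : ∀ᶠ ε in nhds (0:ℝ), ρ (ζ ε) = ρ ε := by
      have hm : Set.Ioo (-(1/2:ℝ)) (1/2) ∈ nhds (0:ℝ) := Ioo_mem_nhds (by norm_num) (by norm_num)
      filter_upwards [hm] with ε hε
      have hεa : |ε| < 1/2 := abs_lt.2 ⟨by linarith [hε.1], hε.2⟩
      have hε1 : |ε| < 1 := lt_trans hεa (by norm_num)
      rw [hval ε, hval (ζ ε), ← hinvstep ε hε1]
    have hζder : HasDerivAt ζ (-1) 0 := by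
      have h1 : HasDerivAt (fun ε : ℝ => -ε) (-1) (0:ℝ) := by
        exact (hasDerivAt_id' (x := (0:ℝ))).neg
      have h2 : HasDerivAt (fun ε : ℝ => 1+ε) 1 (0:ℝ) := by
        simpa using (hasDerivAt_id (0:ℝ)).const_add (1:ℝ)
      have h3 := h1.div h2 (by norm_num)
      have : ((-1) * (1 + 0) - -0 * 1) / (1 + 0)^2 = (-1 : ℝ) := by norm_num
      rw [hζdef]
      exact h3.congr_deriv this
    have hζ0 : ζ 0 = 0 := by rw [hζdef]; norm_num
    have hD : deriv ρ 0 = 0 := deriv_zero_of_invol hζder hζ0 hev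
    have hg2 := hgrad f₀ u
    rw [hgeq] at hg2
    rw [← hρ, hD] at hg2
    have hint : (∫ t in (0:ℝ)..1, ⟪u t, g t⟫ * ‖deriv f₀ t‖)
        = (2*π*r^2) * ∫ t in (0:ℝ)..1, χ t * ψ t := by
      rw [← intervalIntegral.integral_const_mul]
      congr 1
      funext t
      rw [hu]
      simp only
      rw [real_inner_smul_left, hurad_inner, hnormd]
      ring
    rw [hint] at hg2
    have h2πr : (2*π*r^2) ≠ 0 := by positivity
    exact (mul_eq_zero.1 hg2.symm).resolve_left h2πr
  ----------------------------------------------------------------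
  -- KEY BINORMAL IDENTITY
  ----------------------------------------------------------------
  set βf : ℝ → ℝ := fun t => ⟪n, g t⟫ with hβf
  have hβc : Continuous βf := continuous_const.inner hGc
  have keyB : (∫ t in (0:ℝ)..1, (βf t)^2) = 0 := by
    set u : ℝ → E3 := fun t => (r * βf t) • n with hu
    set ρ : ℝ → ℝ := fun ε => e (fun t => f₀ t + ε • u t) with hρ
    have hline : ∀ ε : ℝ, (fun t => f₀ t + ε • u t)
        = (fun t => c + r • O (fstd t + (ε * βf t) • EuclideanSpace.single 2 (1:ℝ))) := by
      intro ε; funext t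
      have hOs : O (fstd t + (ε * βf t) • EuclideanSpace.single 2 (1:ℝ))
          = urad t + (ε * βf t) • n := by
        rw [map_add, _root_.map_smul, hOfstd, hOe2]
      rw [hf₀ t, hu, hOs, hurad]
      module
    have hval : ∀ ε : ℝ, ρ ε
        = e (fun t => fstd t + (ε * βf t) • EuclideanSpace.single 2 (1:ℝ)) := by
      intro ε
      rw [hρ]
      simp only
      rw [hline ε, einv]
    -- reflection across the plane
    set K : Submodule ℝ E3 := (ℝ ∙ (EuclideanSpace.single 2 (1:ℝ) : E3))ᗮ with hK
    set R : E3 ≃ₗᵢ[ℝ] E3 := Submodule.reflection K with hR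
    have hRf : ∀ t, R (fstd t) = fstd t := by
      intro t
      apply Submodule.reflection_mem_subspace_eq_self
      rw [hK, Submodule.mem_orthogonal_singleton_iff_inner_right,
        EuclideanSpace.inner_single_left]
      simp [hfstd2 t]
    have hRs : R (EuclideanSpace.single 2 (1:ℝ)) = -(EuclideanSpace.single 2 (1:ℝ)) := by
      apply Submodule.reflection_mem_subspace_orthogonalComplement_eq_neg
      rw [hK, Submodule.orthogonal_orthogonal]
      exact Submodule.mem_span_singleton_self _
    have hrefl : ∀ ε : ℝ, ρ (-ε) = ρ ε := by
      intro ε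
      rw [hval ε, hval (-ε)]
      have hOiso := hiso (fun t => fstd t + (ε * βf t) • EuclideanSpace.single 2 (1:ℝ)) R
      rw [← hOiso]
      congr 1
      funext t
      rw [map_add, _root_.map_smul, hRf, hRs]
      module
    have hev : ∀ᶠ ε in nhds (0:ℝ), ρ (-ε) = ρ ε := Filter.Eventually.of_forall hrefl
    have hζder : HasDerivAt (fun ε : ℝ => -ε) (-1) (0:ℝ) := by
      exact (hasDerivAt_id' (x := (0:ℝ))).neg
    have hD : deriv ρ 0 = 0 := deriv_zero_of_invol hζder (by norm_num) hev
    have hg2 := hgrad f₀ u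
    rw [hgeq] at hg2
    rw [← hρ, hD] at hg2
    have hint : (∫ t in (0:ℝ)..1, ⟪u t, g t⟫ * ‖deriv f₀ t‖)
        = (2*π*r^2) * ∫ t in (0:ℝ)..1, (βf t)^2 := by
      rw [← intervalIntegral.integral_const_mul]
      congr 1
      funext t
      rw [hu]
      simp only
      rw [real_inner_smul_left, hnormd]
      rw [hβf]
      simp only
      ring
    rw [hint] at hg2
    have h2πr : (2*π*r^2) ≠ 0 := by positivity
    exact (mul_eq_zero.1 hg2.symm).resolve_left h2πr
  ----------------------------------------------------------------
  -- conclude pointwise on [0,1]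
  ----------------------------------------------------------------
  have hβ0 : ∀ t ∈ Set.Icc (0:ℝ) 1, βf t = 0 := by
    have h := zero_of_integral_zero (q := fun t => (βf t)^2) (hβc.pow 2)
      (fun t => sq_nonneg _) keyB
    intro t ht
    exact pow_eq_zero_iff (by norm_num) |>.1 (h t ht)
  have hψ0 : ∀ t ∈ Set.Icc (0:ℝ) 1, ψ t = 0 := by
    -- first: ψ ≤ 0 on [0,1]
    have hA1 := keyR {t | 0 < ψ t}
    have hmax1 : (fun t => ({t | 0 < ψ t} : Set ℝ).indicator (fun _ => (1:ℝ)) t * ψ t)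
        = fun t => max (ψ t) 0 := by
      funext t
      by_cases ht : 0 < ψ t
      · have htm : t ∈ {s : ℝ | 0 < ψ s} := ht
        rw [Set.indicator_of_mem htm, one_mul, max_eq_left ht.le]
      · have htm : t ∉ {s : ℝ | 0 < ψ s} := ht
        rw [Set.indicator_of_notMem htm, zero_mul, max_eq_right (not_lt.1 ht)]
    rw [hmax1] at hA1
    have hle := zero_of_integral_zero (q := fun t => max (ψ t) 0)
      (hψc.max continuous_const) (fun t => le_max_right _ _) hA1
    -- second: ψ ≥ 0 on [0,1]
    have hA2 := keyR {t | ψ t < 0}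
    have hmax2 : (fun t => max (-ψ t) 0)
        = fun t => -(({t | ψ t < 0} : Set ℝ).indicator (fun _ => (1:ℝ)) t * ψ t) := by
      funext t
      by_cases ht : ψ t < 0
      · have htm : t ∈ {s : ℝ | ψ s < 0} := ht
        rw [Set.indicator_of_mem htm, one_mul, max_eq_left (by linarith)]
      · have htm : t ∉ {s : ℝ | ψ s < 0} := ht
        rw [Set.indicator_of_notMem htm, zero_mul, neg_zero, max_eq_right (by
          simp only [Left.neg_nonpos_iff]; exact not_lt.1 ht)]
    have hA2' : (∫ t in (0:ℝ)..1, max (-ψ t) 0) = 0 := by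
      rw [hmax2, intervalIntegral.integral_neg, hA2, neg_zero]
    have hge := zero_of_integral_zero (q := fun t => max (-ψ t) 0)
      ((hψc.neg).max continuous_const) (fun t => le_max_right _ _) hA2'
    intro t ht
    have h1 : ψ t ≤ 0 := by
      have h := hle t ht
      linarith [le_max_left (ψ t) 0, h]
    have h2 : 0 ≤ ψ t := by
      have h := hge t ht
      linarith [le_max_left (-ψ t) 0, h]
    linarith
  have hvanish : ∀ t ∈ Set.Icc (0:ℝ) 1, g t = 0 := by
    intro t ht
    have hψt := hψ0 t ht
    have hτt := htan t
    have hβt := hβ0 t ht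
    rw [hψ] at hψt
    simp only at hψt
    have hsc := Real.sin_sq_add_cos_sq (2*π*t)
    have hvg : (⟪v, g t⟫ : ℝ) = 0 := by
      linear_combination Real.cos (2*π*t) * hψt - Real.sin (2*π*t) * hτt
        - (⟪v, g t⟫ : ℝ) * hsc
    have hwg : (⟪w, g t⟫ : ℝ) = 0 := by
      linear_combination Real.sin (2*π*t) * hψt + Real.cos (2*π*t) * hτt
        - (⟪w, g t⟫ : ℝ) * hsc
    have hsum := b.sum_repr' (g t)
    rw [← hsum, Fin.sum_univ_three, hb0, hb1, ← hn]
    rw [hvg, hwg]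
    rw [hβf] at hβt
    simp only at hβt
    rw [hβt]
    simp
  -- extend by periodicity
  intro t
  have hper : g (t - (⌊t⌋ : ℝ) * 1) = g t := hGp.sub_int_mul_eq ⌊t⌋
  rw [hgeq, ← hper]
  apply hvanish
  rw [mul_one]
  have h1 : t - (⌊t⌋ : ℝ) = Int.fract t := rfl
  rw [h1]
  exact ⟨Int.fract_nonneg t, (Int.fract_lt_one t).le⟩

end
end

section
/- Let Φ: K° × S¹ → ℝ be positive and continuous in the second variable, where K° is the set of non-circular knots. The Φ-weighted inner product ⟨u,v⟩_Φ = ∫_{S¹} ⟨u(t),v(t)⟩ Φ(f,t) |f'(t)| dt on normal fields along f is invariant under a Möbius transformation T (i.e., ⟨T_*u, T_*v⟩_Φ computed along T∘f equals ⟨u,v⟩_Φ along f for all u, v) if and only if Φ(T∘f, t) = |T'(f(t))|^{−6} Φ(f, t) for all t. -/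
open MeasureTheory
open scoped RealInnerProductSpace

noncomputable section

lemma exists_orth' (v : E3) : ∃ e : E3, e ≠ 0 ∧ ⟪e, v⟫ = 0 := by
  have hK : Module.finrank ℝ (ℝ ∙ v) ≤ 1 := by
    rcases eq_or_ne v 0 with rfl | hv
    · rw [Submodule.span_zero_singleton]; simp [finrank_bot]
    · rw [finrank_span_singleton hv]
  have hsum := Submodule.finrank_add_finrank_orthogonal (ℝ ∙ v)
  rw [finrank_euclideanSpace, Fintype.card_fin] at hsum
  have h : (ℝ ∙ v)ᗮ ≠ ⊥ := by
    intro h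
    rw [h, finrank_bot] at hsum
    omega
  obtain ⟨e, he, hne⟩ := Submodule.exists_mem_ne_zero_of_ne_bot h
  exact ⟨e, hne, (Submodule.mem_orthogonal' _ _).mp he v (Submodule.mem_span_singleton_self v)⟩

lemma key' (g : ℝ → ℝ) (hg : Continuous g) (hgper : Function.Periodic g 1)
    (d : ℝ → E3) (hd : Continuous d) (hdper : Function.Periodic d 1) (hdne : ∀ t, d t ≠ 0)
    (H : ∀ u : ℝ → E3, Continuous u → Function.Periodic u 1 → (∀ t, ⟪u t, d t⟫ = 0) →
      ∫ t in (0:ℝ)..1, ‖u t‖ ^ 2 * g t = 0) :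
    ∀ t, g t = 0 := by
  intro t₀
  by_contra hne
  obtain ⟨e, he0, heorth⟩ := exists_orth' (d t₀)
  set w : ℝ → E3 := fun t => e - (⟪e, d t⟫ / ‖d t‖ ^ 2) • d t with hw
  have hd2 : ∀ t, ‖d t‖ ^ 2 ≠ 0 := fun t => pow_ne_zero 2 (norm_ne_zero_iff.mpr (hdne t))
  have hwc : Continuous w := by
    apply Continuous.sub continuous_const
    exact (((continuous_const.inner hd).div ((hd.norm).pow 2) hd2).smul hd)
  have hwper : Function.Periodic w 1 := fun t => by simp only [hw, hdper t]
  have hworth : ∀ t, ⟪w t, d t⟫ = 0 := by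
    intro t
    rw [hw]
    simp only [inner_sub_left, real_inner_smul_left, real_inner_self_eq_norm_sq]
    rw [div_mul_cancel₀ _ (hd2 t), sub_self]
  have hwt0 : w t₀ = e := by simp only [hw, heorth, zero_div, zero_smul, sub_zero]
  -- choose δ
  have hopen : IsOpen {t : ℝ | w t ≠ 0 ∧ 0 < g t * g t₀} :=
    (isOpen_ne.preimage hwc).inter (isOpen_Ioi.preimage (hg.mul continuous_const))
  have ht0mem : t₀ ∈ {t : ℝ | w t ≠ 0 ∧ 0 < g t * g t₀} :=
    ⟨by rw [hwt0]; exact he0, mul_self_pos.mpr hne⟩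
  obtain ⟨δ, hδpos, hball⟩ := Metric.isOpen_iff.mp hopen t₀ ht0mem
  set ε : ℝ := min δ (1/2) with hε
  have hεpos : 0 < ε := lt_min hδpos (by norm_num)
  have hεhalf : ε ≤ 1/2 := min_le_right _ _
  have hεball : ∀ t, |t - t₀| < ε → w t ≠ 0 ∧ 0 < g t * g t₀ := by
    intro t ht
    exact hball (by rw [Metric.mem_ball, Real.dist_eq]; exact ht.trans_le (min_le_left _ _))
  -- the bump function
  set ψ : ℝ → ℝ := fun t => max (Real.cos (2*Real.pi*(t - t₀)) - Real.cos (2*Real.pi*ε)) 0 with hψ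
  have hψc : Continuous ψ := ((Real.continuous_cos.comp (continuous_const.mul (continuous_id.sub continuous_const))).sub continuous_const).max continuous_const
  have hψper : Function.Periodic ψ 1 := by
    intro t
    have : 2*Real.pi*(t + 1 - t₀) = 2*Real.pi*(t - t₀) + 2*Real.pi := by ring
    simp only [hψ, this, Real.cos_add_two_pi]
  have hψnn : ∀ t, 0 ≤ ψ t := fun t => le_max_right _ _
  -- ψ vanishes for ε ≤ |t - t₀| ≤ 1/2
  have hψzero : ∀ t, ε ≤ |t - t₀| → |t - t₀| ≤ 1/2 → ψ t = 0 := by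
    intro t h1 h2
    have hc : Real.cos (2*Real.pi*(t - t₀)) ≤ Real.cos (2*Real.pi*ε) := by
      rw [← Real.cos_abs (2*Real.pi*(t - t₀))]
      have habs : |2*Real.pi*(t - t₀)| = 2*Real.pi*|t - t₀| := by
        rw [abs_mul, abs_of_pos (by positivity)]
      rw [habs]
      apply Real.cos_le_cos_of_nonneg_of_le_pi (by positivity)
      · nlinarith [Real.pi_pos]
      · nlinarith [Real.pi_pos]
    simp only [hψ]
    exact max_eq_right (by linarith)
  -- ψ positive for |t - t₀| < ε
  have hψpos : ∀ t, |t - t₀| < ε → 0 < ψ t := by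
    intro t h
    have hc : Real.cos (2*Real.pi*ε) < Real.cos (2*Real.pi*(t - t₀)) := by
      rw [← Real.cos_abs (2*Real.pi*(t - t₀))]
      have habs : |2*Real.pi*(t - t₀)| = 2*Real.pi*|t - t₀| := by
        rw [abs_mul, abs_of_pos (by positivity)]
      rw [habs]
      apply Real.cos_lt_cos_of_nonneg_of_le_pi (by positivity)
      · nlinarith [Real.pi_pos]
      · nlinarith [Real.pi_pos]
    simp only [hψ]
    rw [max_eq_left (by linarith)]
    linarith
  -- the test field
  set u : ℝ → E3 := fun t => ψ t • w t with hu
  have hInt := H u (hψc.smul hwc) (fun t => by simp only [hu, hψper t, hwper t])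
    (fun t => by simp only [hu, real_inner_smul_left, hworth t, mul_zero])
  -- the integrand
  set h : ℝ → ℝ := fun t => ‖u t‖ ^ 2 * g t with hh
  have hhc : Continuous h := ((hψc.smul hwc).norm.pow 2).mul hg
  have hhper : Function.Periodic h 1 := by
    intro t
    simp only [hh, hu, hψper t, hwper t, hgper t]
  have hhzero : ∀ t, ε ≤ |t - t₀| → |t - t₀| ≤ 1/2 → h t = 0 := by
    intro t h1 h2
    simp only [hh, hu, hψzero t h1 h2, zero_smul, norm_zero]
    ring
  -- shift the integral
  have hshift : ∫ t in (t₀ - 1/2)..(t₀ - 1/2 + 1), h t = ∫ t in (0:ℝ)..(0+1), h t :=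
    hhper.intervalIntegral_add_eq (t₀ - 1/2) 0
  have hint0 : ∫ t in (t₀ - 1/2)..(t₀ + 1/2), h t = 0 := by
    have : t₀ - 1/2 + 1 = t₀ + 1/2 := by ring
    rw [← this, hshift]
    simpa using hInt
  -- split
  have hi1 : IntervalIntegrable h volume (t₀ - 1/2) (t₀ - ε) := hhc.intervalIntegrable _ _
  have hi2 : IntervalIntegrable h volume (t₀ - ε) (t₀ + ε) := hhc.intervalIntegrable _ _
  have hi3 : IntervalIntegrable h volume (t₀ + ε) (t₀ + 1/2) := hhc.intervalIntegrable _ _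
  have hz1 : ∫ t in (t₀ - 1/2)..(t₀ - ε), h t = 0 := by
    rw [intervalIntegral.integral_congr (g := fun _ => (0:ℝ)) ?_, intervalIntegral.integral_zero]
    intro t ht
    rw [Set.uIcc_of_le (by linarith)] at ht
    obtain ⟨h1, h2⟩ := ht
    refine hhzero t ?_ ?_
    · rw [abs_sub_comm, abs_of_nonneg (by linarith)]; linarith
    · rw [abs_sub_comm, abs_of_nonneg (by linarith)]; linarith
  have hz3 : ∫ t in (t₀ + ε)..(t₀ + 1/2), h t = 0 := by
    rw [intervalIntegral.integral_congr (g := fun _ => (0:ℝ)) ?_, intervalIntegral.integral_zero]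
    intro t ht
    rw [Set.uIcc_of_le (by linarith)] at ht
    obtain ⟨h1, h2⟩ := ht
    refine hhzero t ?_ ?_
    · rw [abs_of_nonneg (by linarith)]; linarith
    · rw [abs_of_nonneg (by linarith)]; linarith
  have hsplit : ∫ t in (t₀ - ε)..(t₀ + ε), h t = 0 := by
    have h12 := intervalIntegral.integral_add_adjacent_intervals hi1 hi2
    have h123 := intervalIntegral.integral_add_adjacent_intervals (hi1.trans hi2) hi3
    rw [← h12, hint0, hz1, hz3] at h123
    linarith [h123]
  -- positivity on the middle interval
  have hmid : ∀ t ∈ Set.Ioo (t₀ - ε) (t₀ + ε), 0 < h t * g t₀ := by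
    intro t ht
    have habs : |t - t₀| < ε := abs_sub_lt_iff.mpr ⟨by linarith [ht.2], by linarith [ht.1]⟩
    obtain ⟨hw0, hgg⟩ := hεball t habs
    have hψp := hψpos t habs
    have hwn : 0 < ‖w t‖ := norm_pos_iff.mpr hw0
    have : h t * g t₀ = (ψ t ^ 2 * ‖w t‖ ^ 2) * (g t * g t₀) := by
      simp only [hh, hu, norm_smul, Real.norm_eq_abs, abs_of_pos hψp, mul_pow]
      ring
    rw [this]
    positivity
  -- derive contradiction
  rcases lt_or_gt_of_ne hne with hlt | hgt
  · -- g t₀ < 0 : h < 0 on Ioo, integral < 0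
    have : (0:ℝ) < ∫ t in (t₀ - ε)..(t₀ + ε), -h t := by
      apply intervalIntegral.intervalIntegral_pos_of_pos_on (hhc.neg.intervalIntegrable _ _)
      · intro t ht
        have := hmid t ht
        rw [Pi.neg_apply]
        nlinarith
      · linarith
    rw [intervalIntegral.integral_neg, hsplit] at this
    simp at this
  · have : (0:ℝ) < ∫ t in (t₀ - ε)..(t₀ + ε), h t := by
      apply intervalIntegral.intervalIntegral_pos_of_pos_on (hhc.intervalIntegrable _ _)
      · intro t ht
        have := hmid t ht
        nlinarith
      · linarith
    rw [hsplit] at this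
    simp at this


/-- The Φ-weighted inner product `⟨u,v⟩_Φ = ∫ ⟨u,v⟩ Φ(f,t) |f'(t)| dt` is invariant
under a Möbius transformation `T` if and only if
`Φ(T∘f, t) = |T'(f(t))|⁻⁶ Φ(f, t)` for all `t`, where `|T'(p)| = |det DT(p)|^(1/6)`. -/
theorem stmt10 (f : ℝ → E3) (T : E3 → E3) (Φ : (ℝ → E3) → ℝ → ℝ) (φ : ℝ → ℝ)
    -- `φ t` is the conformal factor `|T'(f(t))|`
    (hφdef : ∀ t, φ t = |LinearMap.det ((fderiv ℝ T (f t) : E3 →L[ℝ] E3) :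
        E3 →ₗ[ℝ] E3)| ^ ((1 : ℝ) / 6))
    (hφpos : ∀ t, 0 < φ t) (hφc : Continuous φ)
    -- the knot `f` : periodic, `C¹`, regular
    (hfper : Function.Periodic f 1) (hf : Differentiable ℝ f)
    (hf' : Continuous (deriv f)) (hfreg : ∀ t, deriv f t ≠ 0)
    -- condition (i) on the weight `Φ` : positive and continuous in `t`
    (hΦpos : ∀ t, 0 < Φ f t) (hΦpos' : ∀ t, 0 < Φ (fun s => T (f s)) t)
    (hΦc : Continuous (Φ f)) (hΦc' : Continuous (Φ (fun s => T (f s))))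
    (hΦper : Function.Periodic (Φ f) 1)
    (hΦper' : Function.Periodic (Φ (fun s => T (f s))) 1)
    -- conformality of `T` along `f` : `⟨T_*u, T_*v⟩ = |T'(f t)|⁴⟨u,v⟩` and
    -- `|(T∘f)'(t)| = |T'(f t)|² |f'(t)|`
    (hconf : ∀ (t : ℝ) (x y : E3),
      ⟪fderiv ℝ T (f t) x, fderiv ℝ T (f t) y⟫ = φ t ^ 4 * ⟪x, y⟫)
    (htan : ∀ t, ‖deriv (fun s => T (f s)) t‖ = φ t ^ 2 * ‖deriv f t‖) :
    -- Möbius invariance of the `Φ`-weighted inner product on normal fields along `f`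
    (∀ u v : ℝ → E3, Continuous u → Continuous v →
        Function.Periodic u 1 → Function.Periodic v 1 →
        (∀ t, ⟪u t, deriv f t⟫ = 0) → (∀ t, ⟪v t, deriv f t⟫ = 0) →
      ∫ t in (0:ℝ)..1, ⟪fderiv ℝ T (f t) (u t), fderiv ℝ T (f t) (v t)⟫
          * Φ (fun s => T (f s)) t * ‖deriv (fun s => T (f s)) t‖
        = ∫ t in (0:ℝ)..1, ⟪u t, v t⟫ * Φ f t * ‖deriv f t‖)
    ↔ (∀ t, Φ (fun s => T (f s)) t = (φ t ^ 6)⁻¹ * Φ f t) := by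
  have hφper : Function.Periodic φ 1 := fun t => by rw [hφdef (t + 1), hφdef t, hfper t]
  have hdper : Function.Periodic (deriv f) 1 := by
    intro t
    have hfe : (fun x => f (x + 1)) = f := funext fun x => hfper x
    rw [← deriv_comp_add_const f 1 t, hfe]
  constructor
  · intro hinv
    set g : ℝ → ℝ := fun t =>
      (φ t ^ 6 * Φ (fun s => T (f s)) t - Φ f t) * ‖deriv f t‖ with hgdef
    have hgc : Continuous g := (((hφc.pow 6).mul hΦc').sub hΦc).mul hf'.norm
    have hgper : Function.Periodic g 1 := fun t => by
      simp only [hgdef, hφper t, hΦper t, hΦper' t, hdper t]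
    have hkey := key' g hgc hgper (deriv f) hf' hdper hfreg ?_
    · intro t
      have hg0 := hkey t
      have hn : ‖deriv f t‖ ≠ 0 := norm_ne_zero_iff.mpr (hfreg t)
      have h6 : φ t ^ 6 ≠ 0 := pow_ne_zero 6 (hφpos t).ne'
      have : φ t ^ 6 * Φ (fun s => T (f s)) t - Φ f t = 0 := by
        rcases mul_eq_zero.mp hg0 with h | h
        · exact h
        · exact absurd h hn
      field_simp
      rw [eq_div_iff h6]
      linarith [this]
    · intro u hu huper huorth
      have h1 := hinv u u hu hu huper huper huorth huorth
      have hl : ∫ t in (0:ℝ)..1, ⟪fderiv ℝ T (f t) (u t), fderiv ℝ T (f t) (u t)⟫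
          * Φ (fun s => T (f s)) t * ‖deriv (fun s => T (f s)) t‖
          = ∫ t in (0:ℝ)..1,
            ‖u t‖ ^ 2 * (φ t ^ 6 * Φ (fun s => T (f s)) t) * ‖deriv f t‖ := by
        apply intervalIntegral.integral_congr
        intro t _
        simp only []
        rw [hconf t, htan t, real_inner_self_eq_norm_sq]
        ring
      have hr : ∫ t in (0:ℝ)..1, ⟪u t, u t⟫ * Φ f t * ‖deriv f t‖
          = ∫ t in (0:ℝ)..1, ‖u t‖ ^ 2 * Φ f t * ‖deriv f t‖ := by
        apply intervalIntegral.integral_congr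
        intro t _
        simp only []
        rw [real_inner_self_eq_norm_sq]
      rw [hl, hr] at h1
      have hic1 : Continuous fun t => ‖u t‖ ^ 2 * (φ t ^ 6 * Φ (fun s => T (f s)) t) * ‖deriv f t‖ :=
        ((hu.norm.pow 2).mul ((hφc.pow 6).mul hΦc')).mul hf'.norm
      have hic2 : Continuous fun t => ‖u t‖ ^ 2 * Φ f t * ‖deriv f t‖ :=
        ((hu.norm.pow 2).mul hΦc).mul hf'.norm
      have hsub := intervalIntegral.integral_sub (μ := volume)
        (hic1.intervalIntegrable 0 1) (hic2.intervalIntegrable 0 1)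
      have heq : ∫ t in (0:ℝ)..1, ‖u t‖ ^ 2 * g t
          = ∫ t in (0:ℝ)..1,
            (‖u t‖ ^ 2 * (φ t ^ 6 * Φ (fun s => T (f s)) t) * ‖deriv f t‖
              - ‖u t‖ ^ 2 * Φ f t * ‖deriv f t‖) := by
        apply intervalIntegral.integral_congr
        intro t _
        simp only [hgdef]

        ring
      rw [heq, hsub, h1, sub_self]
  · intro hpt u v hu hv huper hvper huorth hvorth
    apply intervalIntegral.integral_congr
    intro t _
    simp only []
    rw [hconf t, htan t, hpt t]
    have h0 : φ t ≠ 0 := (hφpos t).ne'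
    field_simp

end
end

section
/- For a knot f and the unit-sphere inversion I(p) = p/|p|² (with f avoiding the origin), the 2-form coefficient ψ(f,s,t) = |f'(s)||f'(t)|/|f(s)−f(t)|² is Möbius invariant: |(I∘f)'(s)||(I∘f)'(t)|/|(I∘f)(s)−(I∘f)(t)|² = |f'(s)||f'(t)|/|f(s)−f(t)|² for all s ≠ t. -/
noncomputable section

open EuclideanGeometry in
lemma inv3_eq_inversion (p : E3) : inv3 p = inversion (0 : E3) 1 p := by
  simp [inv3, inversion, dist_eq_norm, div_pow]

open EuclideanGeometry in
lemma norm_deriv_inv3 (f : ℝ → E3) (hf : Differentiable ℝ f) (h0 : ∀ t, f t ≠ 0) (t : ℝ) :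
    ‖deriv (fun y => inv3 (f y)) t‖ = ‖deriv f t‖ / ‖f t‖ ^ 2 := by
  have hD : HasDerivAt (fun y => inversion (0 : E3) 1 (f y))
      (((1 / dist (f t) 0) ^ 2 • ((ℝ ∙ (f t - 0))ᗮ.reflection : E3 →L[ℝ] E3)) (deriv f t)) t :=
    (hasFDerivAt_inversion (h0 t)).comp_hasDerivAt t (hf t).hasDerivAt
  have : deriv (fun y => inv3 (f y)) t
      = ((1 / dist (f t) 0) ^ 2 • ((ℝ ∙ (f t - 0))ᗮ.reflection : E3 →L[ℝ] E3)) (deriv f t) := by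
    simp only [inv3_eq_inversion]
    exact hD.deriv
  rw [this]
  simp only [ContinuousLinearMap.smul_apply, norm_smul, dist_eq_norm, sub_zero,
    ContinuousLinearMap.coe_coe, LinearIsometryEquiv.norm_map]
  have hn : (0:ℝ) < ‖f t‖ := norm_pos_iff.2 (h0 t)
  rw [div_pow, one_pow]
  rw [Real.norm_eq_abs, abs_of_nonneg (by positivity)]
  field_simp
  exact ((ℝ ∙ f t)ᗮ.reflection).norm_map (deriv f t)

/-- The 2-form coefficient `|f'(s)||f'(t)|/|f(s)−f(t)|²` is invariant under the
unit-sphere inversion `I(p) = p/|p|²` for a knot `f` avoiding the origin. -/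
theorem stmt14 (f : ℝ → E3) (hf : Differentiable ℝ f) (h0 : ∀ t, f t ≠ 0)
    (hinj : ∀ s t : ℝ, s ≠ t → f s ≠ f t) :
    ∀ s t : ℝ, s ≠ t →
      ‖deriv (fun y => inv3 (f y)) s‖ * ‖deriv (fun y => inv3 (f y)) t‖
          / ‖inv3 (f s) - inv3 (f t)‖ ^ 2
        = ‖deriv f s‖ * ‖deriv f t‖ / ‖f s - f t‖ ^ 2 := by
  intro s t hst
  have hdist : ‖inv3 (f s) - inv3 (f t)‖ = 1 / (‖f s‖ * ‖f t‖) * ‖f s - f t‖ := by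
    have := EuclideanGeometry.dist_inversion_inversion (c := (0:E3)) (h0 s) (h0 t) 1
    simpa [inv3_eq_inversion, dist_eq_norm] using this
  rw [norm_deriv_inv3 f hf h0 s, norm_deriv_inv3 f hf h0 t, hdist]
  have hs : (0:ℝ) < ‖f s‖ := norm_pos_iff.2 (h0 s)
  have ht : (0:ℝ) < ‖f t‖ := norm_pos_iff.2 (h0 t)
  have hne : ‖f s - f t‖ ≠ 0 := by
    simpa [sub_eq_zero] using hinj s t hst
  field_simp

end
end
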